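/- Let R be a discrete valuation ring with maximal ideal m and I = m^d a nonzero proper ideal. Let H be a finite R-module with H[m] ⊆ IH, and let M be a finite R-module. Define w(M,H) = #Hom_R(M, H[I]) if there exists a surjection M → H/IH, and w(M,H) = 0 otherwise. Then #Sur_R(M, H) = w(M,H) · #Sur_R(IM, IH), where Sur_R denotes the set of surjective R-module homomorphisms. -/

import Mathlib

open scoped Classical
open scoped DirectSum


lemma aux_mem_smul_top {R : Type*} [CommRing R] {X : Type*} [AddCommGroup X] [Module R X]
    {c : R} {x : X} :
    x ∈ Ideal.span {c} • (⊤ : Submodule R X) ↔ ∃ y, c • y = x := by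
  constructor
  · intro hx
    refine Submodule.smul_induction_on hx (fun r hr n _ => ?_) ?_
    · obtain ⟨b, rfl⟩ := Ideal.mem_span_singleton'.mp hr
      exact ⟨b • n, by rw [mul_comm, mul_smul]⟩
    · rintro x y ⟨x', rfl⟩ ⟨y', rfl⟩
      exact ⟨x' + y', by rw [smul_add]⟩
  · rintro ⟨y, rfl⟩
    exact Submodule.smul_mem_smul (Ideal.mem_span_singleton_self c) trivial

lemma aux_mem_torsion {R : Type*} [CommRing R] {X : Type*} [AddCommGroup X] [Module R X]
    {c : R} {x : X} :
    x ∈ Submodule.torsionBySet R X ((Ideal.span {c} : Ideal R) : Set R) ↔ c • x = 0 := by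
  rw [← Ideal.submodule_span_eq, Submodule.torsionBySet_span_singleton_eq,
    Submodule.mem_torsionBy_iff]

lemma aux_HI_le {R : Type*} [CommRing R] {X : Type*} [AddCommGroup X] [Module R X]
    {ϖ : R} {d : ℕ} (hd : 1 ≤ d)
    (htors : ∀ x : X, ϖ • x = 0 → x ∈ Ideal.span {ϖ ^ d} • (⊤ : Submodule R X)) :
    ∀ x : X, ϖ ^ d • x = 0 → x ∈ Ideal.span {ϖ} • (⊤ : Submodule R X) := by
  suffices h : ∀ k, k ≤ d → ∀ x : X, ϖ ^ k • x = 0 →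
      x ∈ Ideal.span {ϖ} • (⊤ : Submodule R X) from h d le_rfl
  intro k
  induction k with
  | zero =>
    intro _ x hx
    have : x = 0 := by simpa using hx
    rw [this]; exact (Ideal.span {ϖ} • (⊤ : Submodule R X)).zero_mem
  | succ k ih =>
    intro hk x hx
    have h1 : ϖ • (ϖ ^ k • x) = 0 := by
      rw [← mul_smul, ← pow_succ']; exact hx
    obtain ⟨y, hy⟩ := aux_mem_smul_top.mp (htors _ h1)
    have h2 : ϖ ^ k • (x - ϖ ^ (d - k) • y) = 0 := by
      rw [smul_sub, ← mul_smul, ← pow_add]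
      rw [Nat.add_sub_cancel' (Nat.le_of_succ_le hk)]
      rw [hy, sub_self]
    have h3 := ih (Nat.le_of_succ_le hk) _ h2
    have h4 : ϖ ^ (d - k) • y ∈ Ideal.span {ϖ} • (⊤ : Submodule R X) := by
      refine aux_mem_smul_top.mpr ⟨ϖ ^ (d - k - 1) • y, ?_⟩
      rw [← mul_smul, ← pow_succ']
      congr 2
      omega
    simpa using Submodule.add_mem _ h3 h4

lemma aux_nakayama {R : Type*} [CommRing R] [IsLocalRing R] {X : Type*} [AddCommGroup X]
    [Module R X] [Finite X] {N : Submodule R X}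
    (h : ⊤ ≤ N ⊔ (IsLocalRing.maximalIdeal R) • (⊤ : Submodule R X)) : N = ⊤ := by
  refine top_le_iff.mp (Submodule.le_of_le_smul_of_le_jacobson_bot
    (Module.Finite.fg_top (R := R) (M := X)) ?_ h)
  rw [IsLocalRing.jacobson_eq_maximalIdeal (⊥ : Ideal R) bot_ne_top]

lemma aux_isTorsion {R : Type*} [CommRing R] [IsDomain R] [IsDiscreteValuationRing R]
    {X : Type*} [AddCommGroup X] [Module R X] [Finite X] : Module.IsTorsion R X := by
  have hR : Infinite R := by
    rw [← not_finite_iff_infinite]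
    intro hfin
    exact IsDiscreteValuationRing.not_isField R (Finite.isField_of_domain R)
  intro x
  have hinj : ¬ Function.Injective (LinearMap.toSpanSingleton R X x) := by
    intro hinj
    have := Finite.of_injective _ hinj
    exact not_finite R
  rw [← LinearMap.ker_eq_bot] at hinj
  obtain ⟨r, hr, hr0⟩ := Submodule.exists_mem_ne_zero_of_ne_bot hinj
  exact ⟨⟨r, mem_nonZeroDivisors_of_ne_zero hr0⟩, hr⟩

universe u v w

lemma aux_extend {R : Type u} [CommRing R] [IsDomain R] [IsDiscreteValuationRing R]
    {ϖ : R} (hϖ : Irreducible ϖ) (d : ℕ)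
    {H : Type w} [AddCommGroup H] [Module R H]
    {M : Type v} [AddCommGroup M] [Module R M] [Finite M]
    (g : ↥(Ideal.span {ϖ ^ d} • (⊤ : Submodule R M)) →ₗ[R]
      ↥(Ideal.span {ϖ ^ d} • (⊤ : Submodule R H))) :
    ∃ f : M →ₗ[R] H, ∀ x : M,
      (g ⟨ϖ ^ d • x, aux_mem_smul_top.mpr ⟨x, rfl⟩⟩ : H) = ϖ ^ d • f x := by
  obtain ⟨ι, hfin, p, hp, e, ⟨E0⟩⟩ := Module.equiv_directSum_of_isTorsion
    (aux_isTorsion (R := R) (X := ULift.{u} M))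
  set E := (ULift.moduleEquiv.symm.trans E0 : M ≃ₗ[R] _) with hE_def
  choose u hu using fun i => (IsDiscreteValuationRing.associated_of_irreducible R hϖ (hp i))
  set ε : ι → M := fun i => E.symm (DirectSum.lof R ι (fun i => R ⧸ (R ∙ p i ^ e i)) i
    (Submodule.Quotient.mk 1)) with hε_def
  have hqε : ∀ i, (p i ^ e i) • ε i = 0 := by
    intro i
    apply E.injective
    rw [map_smul, map_zero, hε_def]
    simp only [LinearEquiv.apply_symm_apply]
    rw [← map_smul]
    have hmk : (p i ^ e i) • (Submodule.Quotient.mk 1 : R ⧸ (R ∙ p i ^ e i)) = 0 := by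
      rw [← Submodule.Quotient.mk_smul, Submodule.Quotient.mk_eq_zero]
      simpa using Submodule.mem_span_singleton_self _
    rw [hmk, map_zero]
  have hεe : ∀ i, ϖ ^ e i • ε i = 0 := by
    intro i
    have h0 := hqε i
    rw [← hu i, mul_pow] at h0
    have : ((u i ^ e i)⁻¹ : Rˣ) • ((ϖ ^ e i * (u i : R) ^ e i) • ε i) = 0 := by
      rw [h0, smul_zero]
    rwa [Units.smul_def, ← mul_smul, ← Units.val_pow_eq_pow_val, mul_comm (ϖ ^ e i),
      ← mul_assoc, Units.inv_mul, one_mul] at this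
  have memJ : ∀ x : M, ϖ ^ d • x ∈ Ideal.span {ϖ ^ d} • (⊤ : Submodule R M) :=
    fun x => aux_mem_smul_top.mpr ⟨x, rfl⟩
  set z : ι → H := fun i => (g ⟨ϖ ^ d • ε i, memJ _⟩ : H) with hz_def
  choose y hy using fun i => aux_mem_smul_top.mp (g ⟨ϖ ^ d • ε i, memJ _⟩).2
  set h : ι → H := fun i => if d ≤ e i then y i else 0 with hh_def
  have hz0 : ∀ i, e i < d → z i = 0 := by
    intro i hi
    have harg : (⟨ϖ ^ d • ε i, memJ _⟩ : ↥(Ideal.span {ϖ ^ d} • (⊤ : Submodule R M))) = 0 := by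
      apply Subtype.ext
      show ϖ ^ d • ε i = 0
      have : ϖ ^ d = ϖ ^ (d - e i) * ϖ ^ e i := by rw [← pow_add]; congr 1; omega
      rw [this, mul_smul, hεe, smul_zero]
    rw [hz_def]
    simp only [harg, map_zero, Submodule.coe_zero]
  have hzd : ∀ i, z i = ϖ ^ d • h i := by
    intro i
    by_cases hi : d ≤ e i
    · rw [hh_def]; simp only [if_pos hi]; exact (hy i).symm
    · rw [hz0 i (by omega), hh_def]; simp [if_neg hi]
  have hqh : ∀ i, (p i ^ e i) • h i = 0 := by
    intro i
    by_cases hi : d ≤ e i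
    · have h1 : ϖ ^ (e i - d) • z i = 0 := by
        rw [hz_def]
        have harg : ϖ ^ (e i - d) • (⟨ϖ ^ d • ε i, memJ _⟩ :
            ↥(Ideal.span {ϖ ^ d} • (⊤ : Submodule R M))) = 0 := by
          apply Subtype.ext
          show ϖ ^ (e i - d) • (ϖ ^ d • ε i) = 0
          rw [← mul_smul, ← pow_add]
          rw [show e i - d + d = e i by omega]
          exact hεe i
        calc ϖ ^ (e i - d) • ((g ⟨ϖ ^ d • ε i, memJ _⟩ : _) : H)
            = ((ϖ ^ (e i - d) • g ⟨ϖ ^ d • ε i, memJ _⟩ : _) : H) := rfl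
          _ = ((g (ϖ ^ (e i - d) • ⟨ϖ ^ d • ε i, memJ _⟩) : _) : H) := by rw [map_smul]
          _ = 0 := by rw [harg, map_zero]; rfl
      have h2 : ϖ ^ e i • h i = 0 := by
        have : ϖ ^ e i = ϖ ^ (e i - d) * ϖ ^ d := by rw [← pow_add]; congr 1; omega
        rw [this, mul_smul]
        rw [hh_def]; simp only [if_pos hi]
        rw [hy i, h1]
      rw [← hu i, mul_pow, mul_comm, mul_smul, h2, smul_zero]
    · rw [hh_def]; simp [if_neg hi]
  set φ : ∀ i, (R ⧸ (R ∙ p i ^ e i)) →ₗ[R] H := fun i =>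
    Submodule.liftQ _ (LinearMap.toSpanSingleton R H (h i))
      ((Submodule.span_singleton_le_iff_mem _ _).mpr (by
        simp only [LinearMap.mem_ker, LinearMap.toSpanSingleton_apply]
        exact hqh i)) with hφ_def
  set f : M →ₗ[R] H := (DirectSum.toModule R ι H φ).comp (E : M →ₗ[R] _) with hf_def
  -- the two linear maps
  set μ : M →ₗ[R] ↥(Ideal.span {ϖ ^ d} • (⊤ : Submodule R M)) :=
    LinearMap.codRestrict _ (ϖ ^ d • (LinearMap.id : M →ₗ[R] M))
      (fun x => by simpa using memJ x) with hμ_def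
  set L1 : M →ₗ[R] H := (Submodule.subtype _).comp (g.comp μ) with hL1_def
  set L2 : M →ₗ[R] H := ϖ ^ d • f with hL2_def
  have heq : L1 = L2 := by
    have hcomp : L1.comp E.symm.toLinearMap = L2.comp E.symm.toLinearMap := by
      apply DirectSum.linearMap_ext
      intro i
      apply Submodule.linearMap_qext
      apply LinearMap.ext_ring
      simp only [LinearMap.comp_apply, Submodule.mkQ_apply, LinearEquiv.coe_coe]
      show L1 (E.symm (DirectSum.lof R ι (fun i => R ⧸ (R ∙ p i ^ e i)) i
        (Submodule.Quotient.mk 1))) = L2 (E.symm (DirectSum.lof R ι _ i (Submodule.Quotient.mk 1)))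
      show L1 (ε i) = L2 (ε i)
      have hμε : μ (ε i) = ⟨ϖ ^ d • ε i, memJ _⟩ := Subtype.ext (by simp [hμ_def])
      have hl1 : L1 (ε i) = z i := by
        rw [hL1_def]
        simp only [LinearMap.comp_apply, Submodule.subtype_apply, hμε]
        rfl
      have hl2 : L2 (ε i) = ϖ ^ d • h i := by
        rw [hL2_def]
        simp only [LinearMap.smul_apply]
        congr 1
        rw [hf_def]
        simp only [LinearMap.comp_apply, LinearEquiv.coe_coe, hε_def,
          LinearEquiv.apply_symm_apply]
        rw [DirectSum.toModule_lof, hφ_def]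
        erw [Submodule.liftQ_apply]
        rw [LinearMap.toSpanSingleton_apply, one_smul]
      rw [hl1, hl2, hzd i]
    ext x
    have := congrArg (fun (L : _ →ₗ[R] H) => L (E x)) hcomp
    simpa using this
  refine ⟨f, fun x => ?_⟩
  have h2 := congrArg (fun (L : M →ₗ[R] H) => L x) heq
  simp only [hL1_def, hL2_def, LinearMap.comp_apply, Submodule.subtype_apply,
    LinearMap.smul_apply] at h2
  have harg : (⟨ϖ ^ d • x, aux_mem_smul_top.mpr ⟨x, rfl⟩⟩ :
      ↥(Ideal.span {ϖ ^ d} • (⊤ : Submodule R M))) = μ x := by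
    apply Subtype.ext
    simp [hμ_def]
  rw [harg]
  exact h2

/-- `#Sur_R(M, H) = w(M,H) ⬝ #Sur_R(IM, IH)` where `w(M,H) = #Hom_R(M, H[I])` if a surjection
`M ↠ H/IH` exists, and `0` otherwise; here `R` is a DVR, `I = 𝔪^d`, and `H[𝔪] ⊆ IH`. -/
theorem stmt_10 (R : Type*) [CommRing R] [IsDomain R] [IsDiscreteValuationRing R]
    (d : ℕ) (hd : 1 ≤ d) (I : Ideal R) (hI : I = (IsLocalRing.maximalIdeal R) ^ d)
    (H : Type*) [AddCommGroup H] [Module R H] [Finite H]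
    (htors : Submodule.torsionBySet R H ((IsLocalRing.maximalIdeal R : Ideal R) : Set R) ≤
      I • (⊤ : Submodule R H))
    (M : Type*) [AddCommGroup M] [Module R M] [Finite M] :
    Nat.card {f : M →ₗ[R] H // Function.Surjective f} =
      (if Nonempty {f : M →ₗ[R] (H ⧸ (I • (⊤ : Submodule R H))) // Function.Surjective f}
        then Nat.card (M →ₗ[R] ↥(Submodule.torsionBySet R H (I : Set R)))
        else 0) *
      Nat.card {f : ↥(I • (⊤ : Submodule R M)) →ₗ[R] ↥(I • (⊤ : Submodule R H)) //
        Function.Surjective f} := by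
  obtain ⟨ϖ, hϖ⟩ := IsDiscreteValuationRing.exists_irreducible R
  have hm : IsLocalRing.maximalIdeal R = Ideal.span {ϖ} := hϖ.maximalIdeal_eq
  have hIc : I = Ideal.span {ϖ ^ d} := by rw [hI, hm, Ideal.span_singleton_pow]
  rw [hIc]
  rw [hm, hIc] at htors
  have htorsH : ∀ x : H, ϖ • x = 0 → x ∈ Ideal.span {ϖ ^ d} • (⊤ : Submodule R H) :=
    fun x hx => htors (aux_mem_torsion.mpr hx)
  have hHIle : ∀ x : H, ϖ ^ d • x = 0 → x ∈ Ideal.span {ϖ} • (⊤ : Submodule R H) :=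
    aux_HI_le hd htorsH
  have memJM : ∀ x : M, ϖ ^ d • x ∈ Ideal.span {ϖ ^ d} • (⊤ : Submodule R M) :=
    fun x => aux_mem_smul_top.mpr ⟨x, rfl⟩
  have memJH : ∀ x : H, ϖ ^ d • x ∈ Ideal.span {ϖ ^ d} • (⊤ : Submodule R H) :=
    fun x => aux_mem_smul_top.mpr ⟨x, rfl⟩
  -- restriction map
  set ρmap : (M →ₗ[R] H) → (↥(Ideal.span {ϖ ^ d} • (⊤ : Submodule R M)) →ₗ[R]
      ↥(Ideal.span {ϖ ^ d} • (⊤ : Submodule R H))) := fun f =>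
    f.restrict (fun x hx => by
      obtain ⟨y, rfl⟩ := aux_mem_smul_top.mp hx
      rw [map_smul]; exact memJH _) with hρ_def
  have hρval : ∀ (f : M →ₗ[R] H) (x : ↥(Ideal.span {ϖ ^ d} • (⊤ : Submodule R M))),
      ((ρmap f x : H)) = f x := fun f x => rfl
  have hρ_of : ∀ (f : M →ₗ[R] H) (g : ↥(Ideal.span {ϖ ^ d} • (⊤ : Submodule R M)) →ₗ[R]
      ↥(Ideal.span {ϖ ^ d} • (⊤ : Submodule R H))),
      (∀ x : M, (g ⟨ϖ ^ d • x, memJM x⟩ : H) = ϖ ^ d • f x) → ρmap f = g := by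
    intro f g hg
    apply LinearMap.ext
    intro w
    obtain ⟨x, hx⟩ := aux_mem_smul_top.mp w.2
    have harg : (⟨ϖ ^ d • x, memJM x⟩ :
        ↥(Ideal.span {ϖ ^ d} • (⊤ : Submodule R M))) = w := Subtype.ext hx
    apply Subtype.ext
    rw [← harg, hρval, hg x, map_smul]
  have hρ_surj : ∀ f : M →ₗ[R] H, Function.Surjective f → Function.Surjective (ρmap f) := by
    intro f hf z
    obtain ⟨w, hw⟩ := aux_mem_smul_top.mp z.2
    obtain ⟨v, rfl⟩ := hf w
    refine ⟨⟨ϖ ^ d • v, memJM v⟩, Subtype.ext ?_⟩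
    rw [hρval, map_smul, hw]
  -- the section, via the extension lemma
  have hsec0 : ∀ g : {g : ↥(Ideal.span {ϖ ^ d} • (⊤ : Submodule R M)) →ₗ[R]
      ↥(Ideal.span {ϖ ^ d} • (⊤ : Submodule R H)) // Function.Surjective g},
      ∃ f : M →ₗ[R] H, ∀ x : M,
        (g.1 ⟨ϖ ^ d • x, aux_mem_smul_top.mpr ⟨x, rfl⟩⟩ : H) = ϖ ^ d • f x :=
    fun g => aux_extend hϖ d g.1
  choose sec hsec using hsec0
  -- surjectivity criterion
  have hsurj : ∀ (F : M →ₗ[R] H) (g : {g : ↥(Ideal.span {ϖ ^ d} • (⊤ : Submodule R M)) →ₗ[R]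
      ↥(Ideal.span {ϖ ^ d} • (⊤ : Submodule R H)) // Function.Surjective g}),
      (∀ x : M, (g.1 ⟨ϖ ^ d • x, memJM x⟩ : H) = ϖ ^ d • F x) → Function.Surjective F := by
    intro F g hFg
    rw [← LinearMap.range_eq_top]
    apply aux_nakayama
    rintro y -
    obtain ⟨w, hw⟩ := g.2 ⟨ϖ ^ d • y, memJH y⟩
    obtain ⟨x, hx⟩ := aux_mem_smul_top.mp w.2
    have h1 : ϖ ^ d • F x = ϖ ^ d • y := by
      rw [← hFg x]
      have harg : (⟨ϖ ^ d • x, memJM x⟩ :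
          ↥(Ideal.span {ϖ ^ d} • (⊤ : Submodule R M))) = w := Subtype.ext hx
      rw [harg, hw]
    have h2 : y - F x ∈ Ideal.span {ϖ} • (⊤ : Submodule R H) :=
      hHIle _ (by rw [smul_sub, h1, sub_self])
    rw [hm]
    have h3 := Submodule.add_mem_sup (LinearMap.mem_range_self F x) h2
    rwa [add_sub_cancel] at h3
  by_cases hne : Nonempty {f : M →ₗ[R] (H ⧸ (Ideal.span {ϖ ^ d} • (⊤ : Submodule R H))) //
      Function.Surjective f}
  · rw [if_pos hne, ← Nat.card_prod]
    apply Nat.card_congr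
    refine
      { toFun := fun f =>
          (LinearMap.codRestrict _ (f.1 - sec ⟨ρmap f.1, hρ_surj f.1 f.2⟩) (fun x => by
            apply aux_mem_torsion.mpr
            have hs := hsec ⟨ρmap f.1, hρ_surj f.1 f.2⟩ x
            rw [LinearMap.sub_apply, smul_sub, ← hs, hρval, map_smul, sub_self]),
            ⟨ρmap f.1, hρ_surj f.1 f.2⟩)
        invFun := fun gk =>
          ⟨sec gk.2 + (Submodule.torsionBySet R H
              ((Ideal.span {ϖ ^ d} : Ideal R) : Set R)).subtype ∘ₗ gk.1,
            hsurj _ gk.2 (fun x => by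
              rw [LinearMap.add_apply, smul_add, LinearMap.comp_apply,
                Submodule.subtype_apply]
              have hk0 : ϖ ^ d • ((gk.1 x : H)) = 0 := aux_mem_torsion.mp (gk.1 x).2
              rw [hk0, add_zero, ← hsec gk.2 x])⟩
        left_inv := fun f => by
          apply Subtype.ext
          show sec _ + (Submodule.torsionBySet R H _).subtype ∘ₗ
            LinearMap.codRestrict _ (f.1 - sec _) _ = f.1
          rw [LinearMap.subtype_comp_codRestrict]
          abel
        right_inv := fun gk => by
          obtain ⟨k, g⟩ := gk
          have hFg : ∀ x : M, (g.1 ⟨ϖ ^ d • x, memJM x⟩ : H) =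
              ϖ ^ d • (sec g + (Submodule.torsionBySet R H
                ((Ideal.span {ϖ ^ d} : Ideal R) : Set R)).subtype ∘ₗ k) x := by
            intro x
            rw [LinearMap.add_apply, smul_add, LinearMap.comp_apply, Submodule.subtype_apply]
            have hk0 : ϖ ^ d • ((k x : H)) = 0 := aux_mem_torsion.mp (k x).2
            rw [hk0, add_zero, ← hsec g x]
          have hg2 : (⟨ρmap (sec g + (Submodule.torsionBySet R H
              ((Ideal.span {ϖ ^ d} : Ideal R) : Set R)).subtype ∘ₗ k),
              hρ_surj _ (hsurj _ g hFg)⟩ :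
              {g : ↥(Ideal.span {ϖ ^ d} • (⊤ : Submodule R M)) →ₗ[R]
              ↥(Ideal.span {ϖ ^ d} • (⊤ : Submodule R H)) // Function.Surjective g}) = g :=
            Subtype.ext (hρ_of _ g.1 hFg)
          refine Prod.ext ?_ ?_
          · show LinearMap.codRestrict _ _ _ = k
            apply LinearMap.ext
            intro x
            apply Subtype.ext
            rw [LinearMap.codRestrict_apply]
            rw [hg2]
            rw [LinearMap.sub_apply, LinearMap.add_apply, LinearMap.comp_apply,
              Submodule.subtype_apply]
            abel
          · exact hg2
      }
  · rw [if_neg hne, zero_mul]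
    have : IsEmpty {f : M →ₗ[R] H // Function.Surjective f} := by
      refine ⟨fun f => hne ⟨⟨(Submodule.mkQ _).comp f.1, ?_⟩⟩⟩
      rw [LinearMap.coe_comp]
      exact (Submodule.mkQ_surjective _).comp f.2
    exact Nat.card_of_isEmpty
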